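/- Let A = r·e^{iθ} with r > 0, and B, C ∈ ℂ. Then { Z ∈ ℂ : A·Z² + B·Z + C ≽ 0 } = e^{−iθ/2}·D^{1/2}((B² − 4AC)/(4rA)) − B/(2A), i.e., Z is a solution if and only if e^{iθ/2}·(Z + B/(2A)) squared lies in D((B² − 4AC)/(4rA)). -/
import Mathlib


def CGe (W A : ℂ) : Prop := A.re < W.re ∨ (A.re = W.re ∧ A.im ≤ W.im)

lemma cge_smul_sub (r : ℝ) (hr : 0 < r) (X Y : ℂ) :
    CGe ((r : ℂ) * (X - Y)) 0 ↔ CGe X Y := by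
  unfold CGe
  simp only [Complex.zero_re, Complex.zero_im, Complex.mul_re, Complex.mul_im,
    Complex.ofReal_re, Complex.ofReal_im, Complex.sub_re, Complex.sub_im]
  constructor
  · rintro (h | ⟨h1, h2⟩)
    · left; nlinarith
    · right; constructor <;> nlinarith
  · rintro (h | ⟨h1, h2⟩)
    · left; nlinarith
    · right; constructor <;> nlinarith

theorem quadratic_inequality_solution (r θ : ℝ) (hr : 0 < r) (A B C : ℂ)
    (hA : A = (r : ℂ) * Complex.exp (θ * Complex.I)) :
    {Z : ℂ | CGe (A * Z ^ 2 + B * Z + C) 0} =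
      (fun W => W * Complex.exp (-(θ / 2) * Complex.I) - B / (2 * A)) ''
        {W : ℂ | CGe (W ^ 2) ((B ^ 2 - 4 * A * C) / (4 * (r : ℂ) * A))} ∧
    ∀ Z : ℂ, CGe (A * Z ^ 2 + B * Z + C) 0 ↔
      CGe ((Complex.exp ((θ / 2) * Complex.I) * (Z + B / (2 * A))) ^ 2)
        ((B ^ 2 - 4 * A * C) / (4 * (r : ℂ) * A)) := by
  have hr0 : (r : ℂ) ≠ 0 := by exact_mod_cast hr.ne'
  have hexp : Complex.exp (θ * Complex.I) ≠ 0 := Complex.exp_ne_zero _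
  have hA0 : A ≠ 0 := by rw [hA]; exact mul_ne_zero hr0 hexp
  have hsq : Complex.exp ((θ : ℂ) / 2 * Complex.I) ^ 2 = Complex.exp (θ * Complex.I) := by
    rw [sq, ← Complex.exp_add]; congr 1; ring
  have key : ∀ Z : ℂ, A * Z ^ 2 + B * Z + C =
      (r : ℂ) * ((Complex.exp ((θ : ℂ) / 2 * Complex.I) * (Z + B / (2 * A))) ^ 2
        - (B ^ 2 - 4 * A * C) / (4 * (r : ℂ) * A)) := by
    intro Z
    rw [mul_pow, hsq]
    rw [hA]
    field_simp
    ring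
  have hiff : ∀ Z : ℂ, CGe (A * Z ^ 2 + B * Z + C) 0 ↔
      CGe ((Complex.exp ((θ : ℂ) / 2 * Complex.I) * (Z + B / (2 * A))) ^ 2)
        ((B ^ 2 - 4 * A * C) / (4 * (r : ℂ) * A)) := by
    intro Z
    rw [key Z]
    exact cge_smul_sub r hr _ _
  refine ⟨?_, hiff⟩
  ext Z
  simp only [Set.mem_setOf_eq, Set.mem_image]
  rw [hiff Z]
  have h1 : Complex.exp ((θ : ℂ) / 2 * Complex.I) * Complex.exp (-((θ : ℂ) / 2) * Complex.I) = 1 := by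
    rw [← Complex.exp_add]
    rw [show (θ : ℂ) / 2 * Complex.I + -((θ : ℂ) / 2) * Complex.I = 0 by ring]
    exact Complex.exp_zero
  constructor
  · intro h
    refine ⟨Complex.exp ((θ : ℂ) / 2 * Complex.I) * (Z + B / (2 * A)), h, ?_⟩
    linear_combination (Z + B / (2 * A)) * h1
  · rintro ⟨W, hW, rfl⟩
    have h2 : Complex.exp ((θ : ℂ) / 2 * Complex.I) *
        (W * Complex.exp (-((θ : ℂ) / 2) * Complex.I) - B / (2 * A) + B / (2 * A)) = W := by
      linear_combination W * h1
    rw [h2]; exact hW
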